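/- arXiv:1403.7068 — 9 statements merged into one kernel-verified Lean document; each statement's English description precedes it below -/
import Mathlib

section
/- Let ν be a symmetric measure on ℝ with ∫ y² ν(dy) < ∞ and ∫ y⁴ ν(dy) < ∞, let η, φ > 0 and γ ∈ ℝ, and define Ψ(u) := −η u + ∫ ((1 + φ (|y| − γ y)²)^u − 1) ν(dy) for u = 1, 2. Then the following two identities hold: Ψ(1) = −η + φ (1 + γ²) ∫ y² ν(dy), and Ψ(2) = 2Ψ(1) + φ² (1 + 6γ² + γ⁴) ∫ y⁴ ν(dy). -/
open MeasureTheory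

lemma integral_odd_eq_zero (ν : Measure ℝ)
    (hsym : ν.map (fun y => -y) = ν) (f : ℝ → ℝ) (hf : Integrable f ν)
    (hodd : ∀ y, f (-y) = -f y) : ∫ y, f y ∂ν = 0 := by
  have h1 : ∫ y, f y ∂ν = ∫ y, f (-y) ∂ν := by
    conv_lhs => rw [← hsym]
    rw [integral_map measurable_neg.aemeasurable]
    rw [hsym]; exact hf.1
  have h2 : ∫ y, f (-y) ∂ν = -∫ y, f y ∂ν := by
    simp only [hodd]
    exact integral_neg f
  linarith [h1, h2]

/-- Lemma 1(b) of the paper, at the level of the Lévy measure: for a symmetric measure `ν`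
with finite second and fourth moments and the Laplace exponent
`Ψ(u) = −ηu + ∫ ((1 + φ(|y| − γy)²)^u − 1) ν(dy)`, one has
`Ψ(1) = −η + φ(1 + γ²) ∫ y² ν(dy)` and `Ψ(2) = 2Ψ(1) + φ²(1 + 6γ² + γ⁴) ∫ y⁴ ν(dy)`. -/
theorem laplace_exponent_one_two (ν : Measure ℝ)
    (hsym : ν.map (fun y => -y) = ν)
    (h2 : Integrable (fun y => y ^ 2) ν) (h4 : Integrable (fun y => y ^ 4) ν)
    (η φ γ : ℝ) (hη : 0 < η) (hφ : 0 < φ)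
    (Ψ : ℕ → ℝ)
    (hΨ : ∀ u : ℕ, Ψ u = -η * u + ∫ y, ((1 + φ * (|y| - γ * y) ^ 2) ^ u - 1) ∂ν) :
    Ψ 1 = -η + φ * (1 + γ ^ 2) * ∫ y, y ^ 2 ∂ν ∧
    Ψ 2 = 2 * Ψ 1 + φ ^ 2 * (1 + 6 * γ ^ 2 + γ ^ 4) * ∫ y, y ^ 4 ∂ν := by
  -- integrability of the odd pieces
  have hg1 : Integrable (fun y => |y| * y) ν := by
    refine h2.mono ?_ ?_
    · exact ((continuous_abs.mul continuous_id).aestronglyMeasurable)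
    · filter_upwards with y
      simp only [Real.norm_eq_abs, abs_mul, abs_abs, abs_pow]
      nlinarith [abs_nonneg y]
  have hg3 : Integrable (fun y => |y| * y ^ 3) ν := by
    refine h4.mono ?_ ?_
    · exact ((continuous_abs.mul (continuous_pow 3)).aestronglyMeasurable)
    · filter_upwards with y
      simp only [Real.norm_eq_abs, abs_mul, abs_abs, abs_pow]
      nlinarith [abs_nonneg y]
  have hJ1 : ∫ y, |y| * y ∂ν = 0 := by
    refine integral_odd_eq_zero ν hsym _ hg1 ?_
    intro y; simp only [abs_neg]; ring
  have hJ3 : ∫ y, |y| * y ^ 3 ∂ν = 0 := by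
    refine integral_odd_eq_zero ν hsym _ hg3 ?_
    intro y; simp only [abs_neg]; ring
  -- first identity
  have hint1 : Integrable (fun y => (1 + φ * (|y| - γ * y) ^ 2) ^ 1 - 1) ν := by
    have h := (h2.const_mul (φ * (1 + γ ^ 2))).sub (hg1.const_mul (2 * φ * γ))
    refine h.congr (Filter.Eventually.of_forall fun y => ?_)
    have hsq : |y| ^ 2 = y ^ 2 := sq_abs y
    simp only [Pi.sub_apply, pow_one]
    linear_combination (-φ) * hsq
  have e1 : ∫ y, ((1 + φ * (|y| - γ * y) ^ 2) ^ 1 - 1) ∂ν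
      = φ * (1 + γ ^ 2) * (∫ y, y ^ 2 ∂ν) - 2 * φ * γ * (∫ y, |y| * y ∂ν) := by
    have key : (fun y : ℝ => (1 + φ * (|y| - γ * y) ^ 2) ^ 1 - 1)
        = fun y : ℝ => φ * (1 + γ ^ 2) * y ^ 2 - 2 * φ * γ * (|y| * y) := by
      funext y
      have hsq : |y| ^ 2 = y ^ 2 := sq_abs y
      simp only [pow_one]
      linear_combination φ * hsq
    rw [key, integral_sub (h2.const_mul _) (hg1.const_mul _), integral_const_mul,
      integral_const_mul]
  have hP1 : Ψ 1 = -η + φ * (1 + γ ^ 2) * ∫ y, y ^ 2 ∂ν := by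
    rw [hΨ 1, e1, hJ1]; push_cast; ring
  refine ⟨hP1, ?_⟩
  -- second identity
  have e2 : ∫ y, ((1 + φ * (|y| - γ * y) ^ 2) ^ 2 - 1) ∂ν
      = 2 * (∫ y, ((1 + φ * (|y| - γ * y) ^ 2) ^ 1 - 1) ∂ν)
        + φ ^ 2 * (1 + 6 * γ ^ 2 + γ ^ 4) * (∫ y, y ^ 4 ∂ν)
        - φ ^ 2 * (4 * γ * (1 + γ ^ 2)) * (∫ y, |y| * y ^ 3 ∂ν) := by
    have key : (fun y : ℝ => (1 + φ * (|y| - γ * y) ^ 2) ^ 2 - 1)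
        = fun y : ℝ => (2 * ((1 + φ * (|y| - γ * y) ^ 2) ^ 1 - 1)
            + φ ^ 2 * (1 + 6 * γ ^ 2 + γ ^ 4) * y ^ 4)
            - φ ^ 2 * (4 * γ * (1 + γ ^ 2)) * (|y| * y ^ 3) := by
      funext y
      have hsq : |y| ^ 2 = y ^ 2 := sq_abs y
      have hcb : |y| ^ 3 * y = |y| * y ^ 3 := by
        rcases abs_choice y with h | h <;> rw [h] <;> ring
      simp only [pow_one]
      linear_combination (φ ^ 2 * (|y| ^ 2 + y ^ 2 + 6 * γ ^ 2 * y ^ 2)) * hsq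
        + (-4 * γ * φ ^ 2) * hcb
    have hA : Integrable (fun y : ℝ => 2 * ((1 + φ * (|y| - γ * y) ^ 2) ^ 1 - 1)
        + φ ^ 2 * (1 + 6 * γ ^ 2 + γ ^ 4) * y ^ 4) ν :=
      (hint1.const_mul 2).add (h4.const_mul _)
    rw [key, integral_sub hA (hg3.const_mul _),
      integral_add (hint1.const_mul 2) (h4.const_mul _), integral_const_mul,
      integral_const_mul, integral_const_mul]
  rw [hΨ 2, e2, hJ3, hΨ 1]
  push_cast; ring
end

section
/- Let ν be a measure on ℝ with ν({0}) = 0 and ∫ min(1, y²) ν(dy) < ∞ (a Lévy measure), let φ > 0, γ ∈ [0, 1), and let u > 0 be a real number. Then the integral ∫ ((1 + φ (|y| − γ y)²)^u − 1) ν(dy) is finite if and only if ∫_{|y| > 1} |y|^{2u} ν(dy) is finite. -/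
open MeasureTheory


private lemma exp_sub_one_le' (t : ℝ) : Real.exp t - 1 ≤ t * Real.exp t := by
  have h1 : -t + 1 ≤ Real.exp (-t) := Real.add_one_le_exp (-t)
  have h2 : Real.exp (-t) * Real.exp t = 1 := by rw [← Real.exp_add]; simp
  nlinarith [Real.exp_pos t]

private lemma rpow_sub_one_le (x M u : ℝ) (hx : 0 ≤ x) (hM : x ≤ M) (hu : 0 < u) :
    (1 + x) ^ u - 1 ≤ (u * Real.exp (u * M)) * x := by
  have hlog : Real.log (1 + x) ≤ x := by
    have := Real.log_le_sub_one_of_pos (show (0:ℝ) < 1 + x by linarith)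
    linarith
  have h1 : (1 + x) ^ u ≤ Real.exp (u * x) := by
    rw [Real.rpow_def_of_pos (by linarith)]
    exact Real.exp_le_exp.2 (by nlinarith)
  have h2 : Real.exp (u * x) - 1 ≤ (u * x) * Real.exp (u * x) := exp_sub_one_le' _
  have h3 : Real.exp (u * x) ≤ Real.exp (u * M) := Real.exp_le_exp.2 (by nlinarith)
  nlinarith [Real.exp_pos (u * x), mul_nonneg hu.le hx,
    mul_le_mul_of_nonneg_left h3 (mul_nonneg hu.le hx)]

private lemma abs_rpow_two_mul (y u : ℝ) : |y| ^ (2 * u) = (y ^ 2) ^ u := by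
  rw [Real.rpow_mul (abs_nonneg y)]
  norm_num [Real.rpow_two, sq_abs]

/-- Finiteness criterion for the Laplace exponent of the GJR-COGARCH (Lemma 1(a)):
for a Lévy measure `ν`, `φ > 0`, `γ ∈ [0,1)` and real `u > 0`, the integral
`∫ ((1 + φ(|y| − γy)²)^u − 1) ν(dy)` is finite iff `∫_{|y|>1} |y|^{2u} ν(dy)` is finite. -/
theorem laplace_exponent_finite_iff (ν : Measure ℝ)
    (h0 : ν {0} = 0)
    (hlevy : ∫⁻ y, ENNReal.ofReal (min 1 (y ^ 2)) ∂ν < ⊤)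
    (φ γ u : ℝ) (hφ : 0 < φ) (hγ : γ ∈ Set.Ico (0 : ℝ) 1) (hu : 0 < u) :
    (∫⁻ y, ENNReal.ofReal ((1 + φ * (|y| - γ * y) ^ 2) ^ u - 1) ∂ν < ⊤) ↔
      (∫⁻ y in {y : ℝ | 1 < |y|}, ENNReal.ofReal (|y| ^ (2 * u)) ∂ν < ⊤) := by
  obtain ⟨hγ0, hγ1⟩ := hγ
  set A : Set ℝ := {y : ℝ | 1 < |y|} with hA_def
  have hA : MeasurableSet A := (isOpen_lt continuous_const continuous_abs).measurableSet
  -- bounds on the asymmetric power function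
  have hhb : ∀ y : ℝ, (1 - γ) ^ 2 * y ^ 2 ≤ (|y| - γ * y) ^ 2 ∧ (|y| - γ * y) ^ 2 ≤ 4 * y ^ 2 := by
    intro y
    have h1 : 0 ≤ (1 - γ) * |y| := mul_nonneg (by linarith) (abs_nonneg y)
    have h2 : (1 - γ) * |y| ≤ |y| - γ * y := by
      nlinarith [mul_le_mul_of_nonneg_left (le_abs_self y) hγ0]
    have h3 : |y| - γ * y ≤ 2 * |y| := by
      nlinarith [mul_le_mul_of_nonneg_left (neg_abs_le y) hγ0, abs_nonneg y]
    have h0' : 0 ≤ |y| - γ * y := h1.trans h2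
    constructor
    · nlinarith [mul_self_le_mul_self h1 h2, sq_abs y]
    · nlinarith [mul_self_le_mul_self h0' h3, sq_abs y]
  have hφh : ∀ y : ℝ, 0 ≤ φ * (|y| - γ * y) ^ 2 := fun y => by positivity
  -- ν A < ⊤
  have hνA : ν A < ⊤ := by
    have heq : ν A = ∫⁻ y in A, ENNReal.ofReal (min 1 (y ^ 2)) ∂ν := by
      rw [← setLIntegral_one]
      refine setLIntegral_congr_fun hA (fun y hy => ?_)
      have hy1 : (1:ℝ) ≤ y ^ 2 := by nlinarith [sq_abs y, abs_nonneg y, (show 1 < |y| from hy)]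
      rw [min_eq_left hy1]; simp
    rw [heq]
    exact lt_of_le_of_lt (setLIntegral_le_lintegral _ _) hlevy
  -- small part finite
  have hsmall : ∫⁻ y in Aᶜ, ENNReal.ofReal ((1 + φ * (|y| - γ * y) ^ 2) ^ u - 1) ∂ν < ⊤ := by
    set cS : ℝ := (u * Real.exp (u * (4 * φ))) * (4 * φ) with hcS
    have hptw : ∀ y ∈ Aᶜ, ENNReal.ofReal ((1 + φ * (|y| - γ * y) ^ 2) ^ u - 1)
        ≤ ENNReal.ofReal cS * ENNReal.ofReal (min 1 (y ^ 2)) := by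
      intro y hy
      have hy1 : |y| ≤ 1 := by simpa [hA_def] using hy
      have hy2 : y ^ 2 ≤ 1 := by nlinarith [sq_abs y, abs_nonneg y]
      have hb := (hhb y).2
      have hxM : φ * (|y| - γ * y) ^ 2 ≤ 4 * φ := by nlinarith
      have hkey : (1 + φ * (|y| - γ * y) ^ 2) ^ u - 1 ≤ cS * (y ^ 2) := by
        have := rpow_sub_one_le (φ * (|y| - γ * y) ^ 2) (4 * φ) u (hφh y) hxM hu
        have hcpos : 0 ≤ u * Real.exp (u * (4 * φ)) := by positivity
        nlinarith [mul_le_mul_of_nonneg_left (by nlinarith : φ * (|y| - γ * y) ^ 2 ≤ 4 * φ * y ^ 2) hcpos]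
      calc ENNReal.ofReal ((1 + φ * (|y| - γ * y) ^ 2) ^ u - 1)
          ≤ ENNReal.ofReal (cS * (y ^ 2)) := ENNReal.ofReal_le_ofReal hkey
        _ = ENNReal.ofReal cS * ENNReal.ofReal (y ^ 2) := ENNReal.ofReal_mul (by positivity)
        _ = ENNReal.ofReal cS * ENNReal.ofReal (min 1 (y ^ 2)) := by rw [min_eq_right hy2]
    calc ∫⁻ y in Aᶜ, ENNReal.ofReal ((1 + φ * (|y| - γ * y) ^ 2) ^ u - 1) ∂ν
        ≤ ∫⁻ y in Aᶜ, ENNReal.ofReal cS * ENNReal.ofReal (min 1 (y ^ 2)) ∂ν := by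
          refine lintegral_mono_ae ((ae_restrict_iff' hA.compl).2 (ae_of_all _ hptw))
      _ = ENNReal.ofReal cS * ∫⁻ y in Aᶜ, ENNReal.ofReal (min 1 (y ^ 2)) ∂ν :=
          lintegral_const_mul' _ _ ENNReal.ofReal_ne_top
      _ ≤ ENNReal.ofReal cS * ∫⁻ y, ENNReal.ofReal (min 1 (y ^ 2)) ∂ν := by
          gcongr; exact Measure.restrict_le_self
      _ < ⊤ := ENNReal.mul_lt_top ENNReal.ofReal_lt_top hlevy
  constructor
  · intro hfin
    -- lower bound: c * |y|^{2u} ≤ f y + 1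
    set cL : ℝ := (φ * (1 - γ) ^ 2) ^ u with hcL
    have hcLpos : 0 < cL := Real.rpow_pos_of_pos (mul_pos hφ (pow_pos (by linarith) 2)) u
    have hptw : ∀ y : ℝ, ENNReal.ofReal cL * ENNReal.ofReal (|y| ^ (2 * u))
        ≤ ENNReal.ofReal ((1 + φ * (|y| - γ * y) ^ 2) ^ u - 1) + 1 := by
      intro y
      have hb := (hhb y).1
      have h1 : φ * (1 - γ) ^ 2 * y ^ 2 ≤ 1 + φ * (|y| - γ * y) ^ 2 := by nlinarith
      have h2 : (φ * (1 - γ) ^ 2 * y ^ 2) ^ u ≤ (1 + φ * (|y| - γ * y) ^ 2) ^ u :=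
        Real.rpow_le_rpow (by positivity) h1 hu.le
      have h3 : cL * |y| ^ (2 * u) = (φ * (1 - γ) ^ 2 * y ^ 2) ^ u := by
        rw [abs_rpow_two_mul, hcL, ← Real.mul_rpow (by positivity) (by positivity)]
      calc ENNReal.ofReal cL * ENNReal.ofReal (|y| ^ (2 * u))
          = ENNReal.ofReal (cL * |y| ^ (2 * u)) := (ENNReal.ofReal_mul hcLpos.le).symm
        _ ≤ ENNReal.ofReal ((1 + φ * (|y| - γ * y) ^ 2) ^ u) := by
            rw [h3]; exact ENNReal.ofReal_le_ofReal h2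
        _ = ENNReal.ofReal (((1 + φ * (|y| - γ * y) ^ 2) ^ u - 1) + 1) := by ring_nf
        _ ≤ ENNReal.ofReal ((1 + φ * (|y| - γ * y) ^ 2) ^ u - 1) + ENNReal.ofReal 1 :=
            ENNReal.ofReal_add_le
        _ = ENNReal.ofReal ((1 + φ * (|y| - γ * y) ^ 2) ^ u - 1) + 1 := by simp
    have hmain : ENNReal.ofReal cL * ∫⁻ y in A, ENNReal.ofReal (|y| ^ (2 * u)) ∂ν
        ≤ (∫⁻ y in A, ENNReal.ofReal ((1 + φ * (|y| - γ * y) ^ 2) ^ u - 1) ∂ν) + ν A := by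
      calc ENNReal.ofReal cL * ∫⁻ y in A, ENNReal.ofReal (|y| ^ (2 * u)) ∂ν
          = ∫⁻ y in A, ENNReal.ofReal cL * ENNReal.ofReal (|y| ^ (2 * u)) ∂ν :=
            (lintegral_const_mul' _ _ ENNReal.ofReal_ne_top).symm
        _ ≤ ∫⁻ y in A, (ENNReal.ofReal ((1 + φ * (|y| - γ * y) ^ 2) ^ u - 1) + 1) ∂ν :=
            lintegral_mono fun y => hptw y
        _ = (∫⁻ y in A, ENNReal.ofReal ((1 + φ * (|y| - γ * y) ^ 2) ^ u - 1) ∂ν) + ν A := by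
            rw [lintegral_add_right _ measurable_const]; simp
    have hAf : ∫⁻ y in A, ENNReal.ofReal ((1 + φ * (|y| - γ * y) ^ 2) ^ u - 1) ∂ν < ⊤ :=
      lt_of_le_of_lt (setLIntegral_le_lintegral _ _) hfin
    have hrhs : (∫⁻ y in A, ENNReal.ofReal ((1 + φ * (|y| - γ * y) ^ 2) ^ u - 1) ∂ν) + ν A < ⊤ :=
      ENNReal.add_lt_top.2 ⟨hAf, hνA⟩
    have := lt_of_le_of_lt hmain hrhs
    rw [ENNReal.mul_lt_top_iff] at this
    rcases this with ⟨_, h⟩ | h | h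
    · exact h
    · exact absurd h (by simp [ENNReal.ofReal_eq_zero]; nlinarith [pow_pos (show (0:ℝ) < 1 - γ by linarith) 2])
    · simp [h]
  · intro hgfin
    rw [← lintegral_add_compl _ hA]
    refine ENNReal.add_lt_top.2 ⟨?_, hsmall⟩
    set cU : ℝ := (1 + 4 * φ) ^ u with hcU
    have hptw : ∀ y ∈ A, ENNReal.ofReal ((1 + φ * (|y| - γ * y) ^ 2) ^ u - 1)
        ≤ ENNReal.ofReal cU * ENNReal.ofReal (|y| ^ (2 * u)) := by
      intro y hy
      have hy1 : 1 < |y| := hy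
      have hy2 : (1:ℝ) ≤ y ^ 2 := by nlinarith [sq_abs y, abs_nonneg y]
      have hb := (hhb y).2
      have h1 : 1 + φ * (|y| - γ * y) ^ 2 ≤ (1 + 4 * φ) * y ^ 2 := by nlinarith
      have h2 : (1 + φ * (|y| - γ * y) ^ 2) ^ u ≤ ((1 + 4 * φ) * y ^ 2) ^ u :=
        Real.rpow_le_rpow (by positivity) h1 hu.le
      have h3 : ((1 + 4 * φ) * y ^ 2) ^ u = cU * |y| ^ (2 * u) := by
        rw [abs_rpow_two_mul, hcU, ← Real.mul_rpow (by positivity) (by positivity)]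
      calc ENNReal.ofReal ((1 + φ * (|y| - γ * y) ^ 2) ^ u - 1)
          ≤ ENNReal.ofReal (cU * |y| ^ (2 * u)) := by
            refine ENNReal.ofReal_le_ofReal ?_
            have := h2.trans_eq h3
            linarith
        _ = ENNReal.ofReal cU * ENNReal.ofReal (|y| ^ (2 * u)) :=
            ENNReal.ofReal_mul (by positivity)
    calc ∫⁻ y in A, ENNReal.ofReal ((1 + φ * (|y| - γ * y) ^ 2) ^ u - 1) ∂ν
        ≤ ∫⁻ y in A, ENNReal.ofReal cU * ENNReal.ofReal (|y| ^ (2 * u)) ∂ν :=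
          lintegral_mono_ae ((ae_restrict_iff' hA).2 (ae_of_all _ hptw))
      _ = ENNReal.ofReal cU * ∫⁻ y in A, ENNReal.ofReal (|y| ^ (2 * u)) ∂ν :=
          lintegral_const_mul' _ _ ENNReal.ofReal_ne_top
      _ < ⊤ := ENNReal.mul_lt_top ENNReal.ofReal_lt_top hgfin
end

section
/- Let ν be a nonzero symmetric measure on ℝ with ν({0}) = 0 and ∫ y² ν(dy) < ∞, let η, φ > 0 and γ ∈ [0, 1). If −η + φ (1 + γ²) ∫ y² ν(dy) ≤ 0 (i.e. Ψ(1) ≤ 0), then ∫ log(1 + φ (|y| − γ y)²) ν(dy) < η. -/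
open MeasureTheory

/-- Proposition 2(c), first claim: for a nonzero symmetric measure `ν` with `ν({0}) = 0`
and finite second moment, `η, φ > 0`, `γ ∈ [0,1)`, if `Ψ(1) = −η + φ(1+γ²)∫ y² ν(dy) ≤ 0`
then the stationarity condition `∫ log(1 + φ(|y| − γy)²) ν(dy) < η` holds. -/
theorem stationarity_condition_of_psi_one_nonpos (ν : Measure ℝ) (hν : ν ≠ 0)
    (hsym : ν.map (fun y => -y) = ν) (h0 : ν {0} = 0)
    (h2 : Integrable (fun y => y ^ 2) ν)
    (η φ γ : ℝ) (hη : 0 < η) (hφ : 0 < φ) (hγ : γ ∈ Set.Ico (0 : ℝ) 1)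
    (hΨ1 : -η + φ * (1 + γ ^ 2) * ∫ y, y ^ 2 ∂ν ≤ 0) :
    ∫ y, Real.log (1 + φ * (|y| - γ * y) ^ 2) ∂ν < η := by
  obtain ⟨hγ0, hγ1⟩ := hγ
  set g : ℝ → ℝ := fun y => φ * (|y| - γ * y) ^ 2 with hg
  set f : ℝ → ℝ := fun y => Real.log (1 + φ * (|y| - γ * y) ^ 2) with hf
  -- pointwise facts
  have hsq_pos : ∀ y : ℝ, y ≠ 0 → 0 < (|y| - γ * y) ^ 2 := by
    intro y hy
    have h1 : γ * y ≤ γ * |y| := by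
      rcases le_total 0 y with h | h
      · rw [abs_of_nonneg h]
      · have : γ * y ≤ 0 := mul_nonpos_of_nonneg_of_nonpos hγ0 h
        exact this.trans (mul_nonneg hγ0 (abs_nonneg y))
    have h2' : (1 - γ) * |y| ≤ |y| - γ * y := by nlinarith [abs_nonneg y]
    have h3 : 0 < (1 - γ) * |y| :=
      mul_pos (by linarith) (abs_pos.mpr hy)
    have h4 : 0 < |y| - γ * y := lt_of_lt_of_le h3 h2'
    exact pow_pos h4 2
  have hg_nonneg : ∀ y, 0 ≤ g y := fun y => by positivity
  have hfg : ∀ y, f y ≤ g y := by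
    intro y
    have h1 : (0:ℝ) < 1 + φ * (|y| - γ * y) ^ 2 := by positivity
    have := Real.log_le_sub_one_of_pos h1
    simpa [f, g] using this
  have hf_nonneg : ∀ y, 0 ≤ f y := by
    intro y
    apply Real.log_nonneg
    nlinarith [sq_nonneg (|y| - γ * y), hφ.le]
  have hfg_lt : ∀ y : ℝ, y ≠ 0 → f y < g y := by
    intro y hy
    have hsq := hsq_pos y hy
    have h1 : (0:ℝ) < 1 + φ * (|y| - γ * y) ^ 2 := by positivity
    have hne : 1 + φ * (|y| - γ * y) ^ 2 ≠ 1 := by nlinarith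
    have := Real.log_lt_sub_one_of_pos h1 hne
    simpa [f, g] using this
  -- measurability
  have hgm : Measurable g := by
    apply Measurable.mul measurable_const
    exact ((measurable_abs.sub (measurable_const.mul measurable_id)).pow measurable_const)
  have hfm : Measurable f := by
    apply Measurable.log
    exact measurable_const.add hgm
  -- integrability of the odd part and g
  have hodd_int : Integrable (fun y : ℝ => |y| * y) ν := by
    refine h2.mono ((measurable_abs.mul measurable_id).aestronglyMeasurable) ?_
    filter_upwards with y
    simp only [Real.norm_eq_abs, abs_mul, abs_abs, ← abs_pow]
    rw [sq, abs_mul]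
  have hg_int : Integrable g ν := by
    have : g = fun y => φ * (1 + γ ^ 2) * y ^ 2 - 2 * φ * γ * (|y| * y) := by
      funext y
      rcases abs_cases y with ⟨h, _⟩ | ⟨h, _⟩ <;> simp only [hg] <;> rw [h] <;> ring
    rw [this]
    exact ((h2.const_mul _).sub (hodd_int.const_mul _))
  have hf_int : Integrable f ν := by
    refine hg_int.mono hfm.aestronglyMeasurable ?_
    filter_upwards with y
    simp only [Real.norm_eq_abs]
    rw [abs_of_nonneg (hf_nonneg y), abs_of_nonneg (hg_nonneg y)]
    exact hfg y
  -- odd integral is zero by symmetry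
  have hodd_zero : ∫ y, |y| * y ∂ν = 0 := by
    have h1 : ∫ y, |y| * y ∂ν = ∫ y, |(-y)| * (-y) ∂ν := by
      nth_rewrite 1 [← hsym]
      exact integral_map measurable_neg.aemeasurable
        ((measurable_abs.mul measurable_id).aestronglyMeasurable)
    have h2' : ∫ y, |(-y)| * (-y) ∂ν = - ∫ y, |y| * y ∂ν := by
      simp only [abs_neg, mul_neg]
      exact integral_neg _
    rw [h2'] at h1
    linarith
  -- value of ∫ g
  have hg_val : ∫ y, g y ∂ν = φ * (1 + γ ^ 2) * ∫ y, y ^ 2 ∂ν := by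
    have heq : g = fun y => φ * (1 + γ ^ 2) * y ^ 2 - 2 * φ * γ * (|y| * y) := by
      funext y
      rcases abs_cases y with ⟨h, _⟩ | ⟨h, _⟩ <;> simp only [hg] <;> rw [h] <;> ring
    rw [heq, integral_sub (h2.const_mul _) (hodd_int.const_mul _),
      integral_const_mul, integral_const_mul, hodd_zero]
    ring
  -- strict inequality ∫ f < ∫ g
  have hcompl_pos : 0 < ν ({0}ᶜ : Set ℝ) := by
    by_contra h
    push_neg at h
    have h' : ν ({0}ᶜ : Set ℝ) = 0 := le_antisymm h zero_le
    apply hν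
    have : ν Set.univ = 0 := by
      have := measure_union_le (μ := ν) ({0} : Set ℝ) ({0}ᶜ)
      rw [Set.union_compl_self, h0, h'] at this
      simpa using this
    exact Measure.measure_univ_eq_zero.mp this
  have hd_pos : 0 < ∫ y, (g y - f y) ∂ν := by
    rw [integral_pos_iff_support_of_nonneg (fun y => sub_nonneg.mpr (hfg y))
      (hg_int.sub hf_int)]
    refine lt_of_lt_of_le hcompl_pos (measure_mono ?_)
    intro y hy
    have := hfg_lt y hy
    simp only [Function.mem_support]
    intro hc
    exact absurd (sub_eq_zero.mp hc).symm (ne_of_lt this)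
  rw [integral_sub hg_int hf_int] at hd_pos
  have : ∫ y, f y ∂ν < ∫ y, g y ∂ν := by linarith
  calc ∫ y, Real.log (1 + φ * (|y| - γ * y) ^ 2) ∂ν = ∫ y, f y ∂ν := rfl
    _ < ∫ y, g y ∂ν := this
    _ = φ * (1 + γ ^ 2) * ∫ y, y ^ 2 ∂ν := hg_val
    _ ≤ η := by linarith
end

section
/- Let ν be a nonzero symmetric measure on ℝ with ν({0}) = 0 and ∫ y² ν(dy) < ∞, let η, φ > 0 and γ ∈ [0, 1). If −η + φ (1 + γ²) ∫ y² ν(dy) ≤ 0 (i.e. Ψ(1) ≤ 0 for the GJR-COGARCH), then also ∫ log(1 + φ y²) ν(dy) < η, i.e. the stationarity condition for the corresponding symmetric COGARCH (the case γ = 0) holds as well. -/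
open MeasureTheory

/-- Proposition 2(c), second claim: for a nonzero symmetric measure `ν` with `ν({0}) = 0`
and finite second moment, `η, φ > 0`, `γ ∈ [0,1)`, if `Ψ(1) = −η + φ(1+γ²)∫ y² ν(dy) ≤ 0`
for the GJR-COGARCH, then the stationarity condition of the corresponding symmetric
COGARCH (the case `γ = 0`) holds as well: `∫ log(1 + φ y²) ν(dy) < η`. -/
theorem symmetric_stationarity_of_psi_one_nonpos (ν : Measure ℝ) (hν : ν ≠ 0)
    (hsym : ν.map (fun y => -y) = ν) (h0 : ν {0} = 0)
    (h2 : Integrable (fun y => y ^ 2) ν)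
    (η φ γ : ℝ) (hη : 0 < η) (hφ : 0 < φ) (hγ : γ ∈ Set.Ico (0 : ℝ) 1)
    (hΨ1 : -η + φ * (1 + γ ^ 2) * ∫ y, y ^ 2 ∂ν ≤ 0) :
    ∫ y, Real.log (1 + φ * y ^ 2) ∂ν < η := by
  obtain ⟨hγ0, hγ1⟩ := hγ
  have hI0 : 0 ≤ ∫ y, y ^ 2 ∂ν := integral_nonneg fun y => sq_nonneg y
  have hφI : φ * ∫ y, y ^ 2 ∂ν ≤ η := by
    nlinarith [mul_nonneg (mul_nonneg hφ.le (sq_nonneg γ)) hI0]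
  have hpos : ∀ y : ℝ, (0:ℝ) < 1 + φ * y ^ 2 := fun y => by positivity
  have hle : ∀ y : ℝ, Real.log (1 + φ * y ^ 2) ≤ φ * y ^ 2 := fun y => by
    have := Real.log_le_sub_one_of_pos (hpos y)
    linarith
  have hnonneg : ∀ y : ℝ, 0 ≤ Real.log (1 + φ * y ^ 2) := fun y =>
    Real.log_nonneg (by nlinarith [sq_nonneg y])
  have hmeas : Measurable fun y : ℝ => Real.log (1 + φ * y ^ 2) := by
    measurability
  have hint : Integrable (fun y => Real.log (1 + φ * y ^ 2)) ν := by
    refine (h2.const_mul φ).mono' hmeas.aestronglyMeasurable ?_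
    filter_upwards with y
    rw [Real.norm_eq_abs, abs_of_nonneg (hnonneg y)]
    exact hle y
  set f : ℝ → ℝ := fun y => φ * y ^ 2 - Real.log (1 + φ * y ^ 2) with hf
  have hfint : Integrable f ν := (h2.const_mul φ).sub hint
  have hfnonneg : ∀ y, 0 ≤ f y := fun y => sub_nonneg.mpr (hle y)
  have hsupp : {y : ℝ | y ≠ 0} ⊆ Function.support f := by
    intro y hy
    have hy' : y ≠ 0 := hy
    have hy2 : 0 < φ * y ^ 2 := by positivity
    have hne : (1 : ℝ) + φ * y ^ 2 ≠ 1 := by linarith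
    have := Real.log_lt_sub_one_of_pos (hpos y) hne
    simp only [Function.mem_support, hf]
    intro hcontra
    linarith [sub_eq_zero.mp hcontra]
  have hcpos : 0 < ν {y : ℝ | y ≠ 0} := by
    by_contra hle0
    push_neg at hle0
    have hzero : ν {y : ℝ | y ≠ 0} = 0 := le_antisymm hle0 bot_le
    have : ν Set.univ = 0 := by
      have h1 : ν Set.univ ≤ ν {0} + ν {y : ℝ | y ≠ 0} := by
        have : (Set.univ : Set ℝ) = {0} ∪ {y : ℝ | y ≠ 0} := by
          ext y; simp [Classical.em (y = 0)]
        rw [this]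
        exact measure_union_le _ _
      simpa [h0, hzero] using h1
    exact hν (Measure.measure_univ_eq_zero.mp this)
  have hIf : 0 < ∫ y, f y ∂ν := by
    rw [integral_pos_iff_support_of_nonneg hfnonneg hfint]
    exact lt_of_lt_of_le hcpos (measure_mono hsupp)
  have hsub : ∫ y, f y ∂ν = (∫ y, φ * y ^ 2 ∂ν) - ∫ y, Real.log (1 + φ * y ^ 2) ∂ν :=
    integral_sub (h2.const_mul φ) hint
  have hmul : ∫ y, φ * y ^ 2 ∂ν = φ * ∫ y, y ^ 2 ∂ν := integral_const_mul φ _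
  rw [hsub, hmul] at hIf
  linarith
end

section
/- In the GJR-COGARCH method-of-moments setting (Δ, S > 0; θ, η, φ > 0; γ ∈ [0,1); γ̃ = 1 + γ²; H = γ̃² + 4γ̃ − 4; p = η − φγ̃ > 0; q = 2p − φ²HS > 0; μ = θΔ/p; E = (1 − e^{−Δp})(e^{Δp} − 1); Γ and k as defined), the quantity M₁ := Γ − (6kΓ/E)(pΔ − 1 + e^{−Δp}) − 2μ² satisfies M₁ = 2θ²ΔS/(pq); in particular M₁ > 0. -/
set_option maxHeartbeats 2000000


/-- In the GJR-COGARCH method-of-moments setting, the quantity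
`M₁ = Γ − (6kΓ/E)(pΔ − 1 + e^{−Δp}) − 2μ²` satisfies `M₁ = 2θ²ΔS/(pq)`;
in particular `M₁ > 0`. -/
theorem mom_M1_formula
    (Δ S θ η φ γ γt H p q μ E Γ k : ℝ)
    (hΔ : 0 < Δ) (hS : 0 < S) (hθ : 0 < θ) (hη : 0 < η) (hφ : 0 < φ)
    (hγ : γ ∈ Set.Ico (0 : ℝ) 1)
    (hγt : γt = 1 + γ ^ 2) (hH : H = γt ^ 2 + 4 * γt - 4)
    (hp : p = η - φ * γt) (hp0 : 0 < p)
    (hq : q = 2 * p - φ ^ 2 * H * S) (hq0 : 0 < q)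
    (hμ : μ = θ * Δ / p)
    (hE : E = (1 - Real.exp (-Δ * p)) * (Real.exp (Δ * p) - 1))
    (hΓ : Γ = 6 * (θ ^ 2 / p ^ 2) * (2 * η / φ - γt) * (2 / q - 1 / p)
            * (Δ - (1 - Real.exp (-Δ * p)) / p)
          + 2 * (θ ^ 2 / φ ^ 2) * (2 / q - 1 / p) * H⁻¹ * Δ
          + 2 * (θ ^ 2 / p ^ 2) * Δ ^ 2)
    (hk : k = (θ ^ 2 / (Γ * p ^ 3)) * (2 * η / φ - γt) * (2 / q - 1 / p) * E)
    (M₁ : ℝ)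
    (hM1 : M₁ = Γ - (6 * k * Γ / E) * (p * Δ - 1 + Real.exp (-Δ * p)) - 2 * μ ^ 2) :
    M₁ = 2 * θ ^ 2 * Δ * S / (p * q) ∧ 0 < M₁ := by
  obtain ⟨hγ0, hγ1⟩ := hγ
  have hγt1 : 1 ≤ γt := by nlinarith
  have hH0 : 0 < H := by nlinarith
  have hpne : p ≠ 0 := ne_of_gt hp0
  have hqne : q ≠ 0 := ne_of_gt hq0
  have hφne : φ ≠ 0 := ne_of_gt hφ
  have hHne : H ≠ 0 := ne_of_gt hH0
  have hηγ : 0 < η - φ * γt := hp ▸ hp0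
  have hA : 0 < 2 * η / φ - γt := by
    have h1 : 2 * η / φ - γt = (2 * η - φ * γt) / φ := by field_simp
    rw [h1]
    exact div_pos (by nlinarith) hφ
  have hB : 2 / q - 1 / p = φ ^ 2 * H * S / (p * q) := by
    have h1 : 2 / q - 1 / p = (2 * p - q) / (p * q) := by
      rw [div_sub_div _ _ hqne hpne, mul_one, mul_comm q p]
    rw [h1, hq]
    ring_nf
  have hB0 : 0 < 2 / q - 1 / p := by rw [hB]; positivity
  have hxp : 0 < Δ * p := mul_pos hΔ hp0
  have hneg : -Δ * p = -(Δ * p) := by ring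
  have hE0 : 0 < E := by
    rw [hE, hneg]
    apply mul_pos
    · have := Real.exp_lt_one_iff.mpr (by linarith : -(Δ * p) < 0)
      linarith
    · have := Real.one_lt_exp_iff.mpr hxp
      linarith
  have hEne : E ≠ 0 := ne_of_gt hE0
  have hT : 0 ≤ Δ - (1 - Real.exp (-Δ * p)) / p := by
    rw [sub_nonneg, div_le_iff₀ hp0, hneg]
    have := Real.add_one_le_exp (-(Δ * p))
    linarith
  have hΓ0 : 0 < Γ := by
    rw [hΓ]
    have h1 : 0 ≤ 6 * (θ ^ 2 / p ^ 2) * (2 * η / φ - γt) * (2 / q - 1 / p)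
        * (Δ - (1 - Real.exp (-Δ * p)) / p) :=
      mul_nonneg (mul_nonneg (mul_nonneg (by positivity) hA.le) hB0.le) hT
    have h2 : 0 < 2 * (θ ^ 2 / φ ^ 2) * (2 / q - 1 / p) * H⁻¹ * Δ :=
      mul_pos (mul_pos (mul_pos (by positivity) hB0) (by positivity)) hΔ
    have h3 : 0 < 2 * (θ ^ 2 / p ^ 2) * Δ ^ 2 := by positivity
    linarith
  have hΓne : Γ ≠ 0 := ne_of_gt hΓ0
  have hkey : 6 * k * Γ / E = 6 * (θ ^ 2 / p ^ 3) * (2 * η / φ - γt) * (2 / q - 1 / p) := by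
    rw [hk]
    field_simp
  have hM : M₁ = 2 * θ ^ 2 * Δ * S / (p * q) := by
    rw [hM1, hkey, hΓ, hμ, hB]
    field_simp
    ring
  exact ⟨hM, by rw [hM]; positivity⟩
end

section
/- In the GJR-COGARCH method-of-moments setting (Δ, S > 0; θ, η, φ > 0; γ ∈ [0,1); γ̃ = 1 + γ²; H = γ̃² + 4γ̃ − 4; p = η − φγ̃ > 0; q = 2p − φ²HS > 0; μ = θΔ/p; E = (1 − e^{−Δp})(e^{Δp} − 1); Γ, k, M₁ as defined), the quantity M₂ := 1 − μ²S/(ΔM₁) satisfies M₂ = φ²HS/(2p); in particular M₂ > 0. -/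
set_option maxHeartbeats 1000000 in
/-- In the GJR-COGARCH method-of-moments setting, the quantity `M₂ = 1 − μ²S/(ΔM₁)`
satisfies `M₂ = φ²HS/(2p)`; in particular `M₂ > 0`. -/
theorem mom_M2_formula
    (Δ S θ η φ γ γt H p q μ E Γ k : ℝ)
    (hΔ : 0 < Δ) (hS : 0 < S) (hθ : 0 < θ) (hη : 0 < η) (hφ : 0 < φ)
    (hγ : γ ∈ Set.Ico (0 : ℝ) 1)
    (hγt : γt = 1 + γ ^ 2) (hH : H = γt ^ 2 + 4 * γt - 4)
    (hp : p = η - φ * γt) (hp0 : 0 < p)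
    (hq : q = 2 * p - φ ^ 2 * H * S) (hq0 : 0 < q)
    (hμ : μ = θ * Δ / p)
    (hE : E = (1 - Real.exp (-Δ * p)) * (Real.exp (Δ * p) - 1))
    (hΓ : Γ = 6 * (θ ^ 2 / p ^ 2) * (2 * η / φ - γt) * (2 / q - 1 / p)
            * (Δ - (1 - Real.exp (-Δ * p)) / p)
          + 2 * (θ ^ 2 / φ ^ 2) * (2 / q - 1 / p) * H⁻¹ * Δ
          + 2 * (θ ^ 2 / p ^ 2) * Δ ^ 2)
    (hk : k = (θ ^ 2 / (Γ * p ^ 3)) * (2 * η / φ - γt) * (2 / q - 1 / p) * E)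
    (M₁ M₂ : ℝ)
    (hM1 : M₁ = Γ - (6 * k * Γ / E) * (p * Δ - 1 + Real.exp (-Δ * p)) - 2 * μ ^ 2)
    (hM2 : M₂ = 1 - μ ^ 2 * S / (Δ * M₁)) :
    M₂ = φ ^ 2 * H * S / (2 * p) ∧ 0 < M₂ := by
  have hH0 : 0 < H := by
    rw [hH, hγt]; nlinarith [sq_nonneg γ, sq_nonneg (γ ^ 2)]
  have hΔp : 0 < Δ * p := mul_pos hΔ hp0
  have hx : Real.exp (-Δ * p) < 1 := by
    rw [Real.exp_lt_one_iff]; nlinarith [hΔp]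
  have hy : 1 < Real.exp (Δ * p) := Real.one_lt_exp_iff.mpr hΔp
  have hE0 : 0 < E := by rw [hE]; exact mul_pos (by linarith) (by linarith)
  have hA : 0 < 2 * η / φ - γt := by
    have h1 : 0 < η - φ * γt := hp ▸ hp0
    have h2 : γt < η / φ := by rw [lt_div_iff₀ hφ]; nlinarith [h1]
    have h3 : 0 < η / φ := div_pos hη hφ
    have h4 : 2 * η / φ = η / φ + η / φ := by ring
    linarith
  have hB : 2 / q - 1 / p = φ ^ 2 * H * S / (p * q) := by
    rw [div_sub_div _ _ hq0.ne' hp0.ne', hq]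
    field_simp
    ring
  have hB0 : 0 < 2 / q - 1 / p := by rw [hB]; positivity
  have hT : 0 < Δ - (1 - Real.exp (-Δ * p)) / p := by
    have h1 : 1 - Real.exp (-Δ * p) < Δ * p := by
      have h2 := Real.add_one_lt_exp (x := -(Δ * p)) (neg_ne_zero.mpr hΔp.ne')
      have h3 : -Δ * p = -(Δ * p) := by ring
      rw [h3]; linarith
    rw [sub_pos, div_lt_iff₀ hp0]; exact h1
  have hΓ0 : 0 < Γ := by rw [hΓ]; positivity
  have hkey : 6 * k * Γ / E
      = 6 * (θ ^ 2 / p ^ 3) * (2 * η / φ - γt) * (2 / q - 1 / p) := by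
    rw [hk]; field_simp
  have hM1' : M₁ = 2 * θ ^ 2 * S * Δ / (p * q) := by
    rw [hM1, hkey, hΓ, hμ, hB]
    field_simp
    ring
  have hM10 : 0 < M₁ := by rw [hM1']; positivity
  have h2 : M₂ = φ ^ 2 * H * S / (2 * p) := by
    rw [hM2, hM1', hμ, hq]
    field_simp
    ring
  exact ⟨h2, by rw [h2]; positivity⟩
end

section
/- In the GJR-COGARCH method-of-moments setting (Δ, S > 0; θ, η, φ > 0; γ ∈ [0,1); γ̃ = 1 + γ²; H = γ̃² + 4γ̃ − 4; p = η − φγ̃ > 0; q = 2p − φ²HS > 0; μ = θΔ/p; E = (1 − e^{−Δp})(e^{Δp} − 1); Γ, k, M₁, M₂ as defined), the quantity M₃ := ΔkΓp²S/(M₁E) satisfies M₃ = (2p/φ + γ̃)·M₂, and consequently M₃ ≥ M₂ > 0 (using γ̃ ≥ 1). -/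
set_option maxHeartbeats 1000000


/-- In the GJR-COGARCH method-of-moments setting, the quantity `M₃ = ΔkΓp²S/(M₁E)`
satisfies `M₃ = (2p/φ + γ̃)·M₂`, and consequently `M₃ ≥ M₂ > 0` (using `γ̃ ≥ 1`). -/
theorem mom_M3_formula
    (Δ S θ η φ γ γt H p q μ E Γ k : ℝ)
    (hΔ : 0 < Δ) (hS : 0 < S) (hθ : 0 < θ) (hη : 0 < η) (hφ : 0 < φ)
    (hγ : γ ∈ Set.Ico (0 : ℝ) 1)
    (hγt : γt = 1 + γ ^ 2) (hH : H = γt ^ 2 + 4 * γt - 4)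
    (hp : p = η - φ * γt) (hp0 : 0 < p)
    (hq : q = 2 * p - φ ^ 2 * H * S) (hq0 : 0 < q)
    (hμ : μ = θ * Δ / p)
    (hE : E = (1 - Real.exp (-Δ * p)) * (Real.exp (Δ * p) - 1))
    (hΓ : Γ = 6 * (θ ^ 2 / p ^ 2) * (2 * η / φ - γt) * (2 / q - 1 / p)
            * (Δ - (1 - Real.exp (-Δ * p)) / p)
          + 2 * (θ ^ 2 / φ ^ 2) * (2 / q - 1 / p) * H⁻¹ * Δ
          + 2 * (θ ^ 2 / p ^ 2) * Δ ^ 2)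
    (hk : k = (θ ^ 2 / (Γ * p ^ 3)) * (2 * η / φ - γt) * (2 / q - 1 / p) * E)
    (M₁ M₂ M₃ : ℝ)
    (hM1 : M₁ = Γ - (6 * k * Γ / E) * (p * Δ - 1 + Real.exp (-Δ * p)) - 2 * μ ^ 2)
    (hM2 : M₂ = 1 - μ ^ 2 * S / (Δ * M₁))
    (hM3 : M₃ = Δ * k * Γ * p ^ 2 * S / (M₁ * E)) :
    M₃ = (2 * p / φ + γt) * M₂ ∧ M₂ ≤ M₃ ∧ 0 < M₂ := by
  obtain ⟨hγ0, hγ1⟩ := hγ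
  have hγt1 : 1 ≤ γt := by have := sq_nonneg γ; linarith
  have hH0 : 0 < H := by
    have h1 : H = 1 + 6 * γ ^ 2 + (γ ^ 2) ^ 2 := by rw [hH, hγt]; ring
    have := sq_nonneg γ
    have := sq_nonneg (γ ^ 2)
    linarith
  have hη' : η = p + φ * γt := by linarith
  have hC : 2 * η / φ - γt = 2 * p / φ + γt := by
    rw [hη']; field_simp; ring
  have hC0 : 0 < 2 * η / φ - γt := by
    rw [hC]
    have : 0 < 2 * p / φ := by positivity
    linarith
  have h2pq : 2 * p - q = φ ^ 2 * H * S := by linarith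
  have hD : 2 / q - 1 / p = φ ^ 2 * H * S / (p * q) := by
    rw [div_sub_div _ _ hq0.ne' hp0.ne',
      show 2 * p - q * 1 = φ ^ 2 * H * S by linarith,
      show q * p = p * q by ring]
  have hD0 : 0 < 2 / q - 1 / p := by rw [hD]; positivity
  have hx : 0 < Δ * p := mul_pos hΔ hp0
  have ha1 : Real.exp (-Δ * p) < 1 := by
    rw [neg_mul]; exact Real.exp_lt_one_iff.mpr (by linarith)
  have hb1 : 1 < Real.exp (Δ * p) := by linarith [Real.add_one_le_exp (Δ*p)]
  have hE0 : 0 < E := by rw [hE]; exact mul_pos (by linarith) (by linarith)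
  have hT0 : 0 ≤ Δ - (1 - Real.exp (-Δ * p)) / p := by
    have h1 : 1 - Δ * p ≤ Real.exp (-Δ * p) := by
      have := Real.add_one_le_exp (-(Δ * p))
      rw [neg_mul]; linarith
    have : (1 - Real.exp (-Δ * p)) / p ≤ Δ := by
      rw [div_le_iff₀ hp0]; linarith
    linarith
  have hΓ0 : 0 < Γ := by
    rw [hΓ]
    have h1 : 0 ≤ 6 * (θ ^ 2 / p ^ 2) * (2 * η / φ - γt) * (2 / q - 1 / p)
        * (Δ - (1 - Real.exp (-Δ * p)) / p) := by
      apply mul_nonneg _ hT0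
      apply mul_nonneg (mul_nonneg (by positivity) hC0.le) hD0.le
    have h2 : 0 < 2 * (θ ^ 2 / φ ^ 2) * (2 / q - 1 / p) * H⁻¹ * Δ := by
      apply mul_pos _ hΔ
      apply mul_pos (mul_pos (by positivity) hD0) (by positivity)
    have h3 : 0 < 2 * (θ ^ 2 / p ^ 2) * Δ ^ 2 := by positivity
    linarith
  have hkΓ : k * Γ = θ ^ 2 / p ^ 3 * ((2 * η / φ - γt) * ((2 / q - 1 / p) * E)) := by
    rw [hk]; field_simp
  have hM1' : M₁ = 2 * θ ^ 2 * S * Δ / (p * q) := by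
    rw [hM1, show (6 * k * Γ / E) = 6 * (k * Γ) / E from by ring, hkΓ, hΓ, hμ, hD, hC]
    field_simp
    ring
  have hM10 : 0 < M₁ := by rw [hM1']; positivity
  have hM2' : M₂ = φ ^ 2 * H * S / (2 * p) := by
    rw [hM2, hM1', hμ]
    field_simp
    linear_combination (-1 : ℝ) * hq
  have hM20 : 0 < M₂ := by rw [hM2']; positivity
  have hM3' : M₃ = (2 * p / φ + γt) * (φ ^ 2 * H * S / (2 * p)) := by
    rw [hM3, show Δ * k * Γ * p ^ 2 * S / (M₁ * E) = Δ * (k * Γ) * p ^ 2 * S / (M₁ * E)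
      from by ring, hkΓ, hM1', hD, hC]
    field_simp
  have heq : M₃ = (2 * p / φ + γt) * M₂ := by rw [hM3', hM2']
  refine ⟨heq, ?_, hM20⟩
  have h1 : 1 ≤ 2 * p / φ + γt := by
    have : 0 < 2 * p / φ := by positivity
    linarith
  rw [heq]
  exact le_mul_of_one_le_left hM20.le h1
end

section
/- In the GJR-COGARCH method-of-moments setting (Δ, S > 0; θ, η, φ > 0; γ ∈ [0,1); γ̃ = 1 + γ²; H = γ̃² + 4γ̃ − 4; p = η − φγ̃ > 0; q = 2p − φ²HS > 0; μ = θΔ/p; E = (1 − e^{−Δp})(e^{Δp} − 1); Γ, k, M₁, M₂, M₃, M₄ as defined), the quantity γ̃ satisfies the identification equation √M₄ · H · S · γ̃ = −M₂γ̃² + M₃γ̃ + H·S·p. -/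
set_option maxHeartbeats 1000000 in
/-- In the GJR-COGARCH method-of-moments setting, the quantity `γ̃ = 1 + γ²` satisfies
the identification equation `√M₄ · H · S · γ̃ = −M₂γ̃² + M₃γ̃ + HSp` (eq. (3.4) of the
paper). -/
theorem mom_gamma_tilde_identification
    (Δ S θ η φ γ γt H p q μ E Γ k : ℝ)
    (hΔ : 0 < Δ) (hS : 0 < S) (hθ : 0 < θ) (hη : 0 < η) (hφ : 0 < φ)
    (hγ : γ ∈ Set.Ico (0 : ℝ) 1)
    (hγt : γt = 1 + γ ^ 2) (hH : H = γt ^ 2 + 4 * γt - 4)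
    (hp : p = η - φ * γt) (hp0 : 0 < p)
    (hq : q = 2 * p - φ ^ 2 * H * S) (hq0 : 0 < q)
    (hμ : μ = θ * Δ / p)
    (hE : E = (1 - Real.exp (-Δ * p)) * (Real.exp (Δ * p) - 1))
    (hΓ : Γ = 6 * (θ ^ 2 / p ^ 2) * (2 * η / φ - γt) * (2 / q - 1 / p)
            * (Δ - (1 - Real.exp (-Δ * p)) / p)
          + 2 * (θ ^ 2 / φ ^ 2) * (2 / q - 1 / p) * H⁻¹ * Δ
          + 2 * (θ ^ 2 / p ^ 2) * Δ ^ 2)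
    (hk : k = (θ ^ 2 / (Γ * p ^ 3)) * (2 * η / φ - γt) * (2 / q - 1 / p) * E)
    (M₁ M₂ M₃ M₄ : ℝ)
    (hM1 : M₁ = Γ - (6 * k * Γ / E) * (p * Δ - 1 + Real.exp (-Δ * p)) - 2 * μ ^ 2)
    (hM2 : M₂ = 1 - μ ^ 2 * S / (Δ * M₁))
    (hM3 : M₃ = Δ * k * Γ * p ^ 2 * S / (M₁ * E))
    (hM4 : M₄ = p ^ 2 / γt ^ 2 + 2 * Δ * k * Γ * p ^ 3 / (γt * M₁ * E * H)) :
    Real.sqrt M₄ * H * S * γt = -M₂ * γt ^ 2 + M₃ * γt + H * S * p := by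
  obtain ⟨hγ0, hγ1⟩ := hγ
  have hγt1 : 1 ≤ γt := by nlinarith [sq_nonneg γ]
  have hγt0 : 0 < γt := by linarith
  have hH0 : 0 < H := by nlinarith
  have hη' : η = p + φ * γt := by linarith
  -- exp facts
  have hxe : Real.exp (-Δ * p) = (Real.exp (Δ * p))⁻¹ := by
    rw [neg_mul, Real.exp_neg]
  set x := Real.exp (Δ * p) with hxdef
  have hx0 : 0 < x := Real.exp_pos _
  have hx1 : 1 < x := by
    rw [hxdef]
    have h := Real.add_one_lt_exp (x := Δ * p) (by positivity)
    nlinarith [mul_pos hΔ hp0]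
  have hE0 : 0 < E := by
    rw [hE, hxe]
    have h1 : x⁻¹ < 1 := by
      rw [inv_lt_one_iff₀]; right; exact hx1
    apply mul_pos <;> linarith
  -- the relation `φ²HS = 2p - q`
  have hSval : S = (2 * p - q) / (φ ^ 2 * H) := by
    rw [hq]; field_simp; ring
  have hq2p : q < 2 * p := by nlinarith [mul_pos (mul_pos (pow_pos hφ 2) hH0) hS]
  -- positivity of the pieces of Γ
  have hB1 : 0 < 2 * η / φ - γt := by
    have h2 : 2 * η / φ - γt = (2 * p + φ * γt) / φ := by
      rw [hη']; field_simp; ring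
    rw [h2]
    positivity
  have hB2 : 0 < 2 / q - 1 / p := by
    rw [div_sub_div _ _ hq0.ne' hp0.ne']
    exact div_pos (by linarith) (by positivity)
  have hB3 : 0 < Δ - (1 - x⁻¹) / p := by
    have h := Real.add_one_lt_exp (x := -(Δ * p)) (neg_ne_zero.mpr (mul_pos hΔ hp0).ne')
    rw [Real.exp_neg] at h
    rw [sub_pos, div_lt_iff₀ hp0]
    linarith
  have hΓ0 : 0 < Γ := by
    rw [hΓ, hxe]
    have t1 : 0 < 6 * (θ ^ 2 / p ^ 2) * (2 * η / φ - γt) * (2 / q - 1 / p)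
        * (Δ - (1 - x⁻¹) / p) :=
      mul_pos (mul_pos (mul_pos (by positivity) hB1) hB2) hB3
    have t2 : 0 < 2 * (θ ^ 2 / φ ^ 2) * (2 / q - 1 / p) * H⁻¹ * Δ :=
      mul_pos (mul_pos (mul_pos (by positivity) hB2) (by positivity)) hΔ
    have t3 : 0 < 2 * (θ ^ 2 / p ^ 2) * Δ ^ 2 := by positivity
    linarith
  -- M₁
  have hkΓ : 6 * k * Γ / E = 6 * θ ^ 2 * (2 * η / φ - γt) * (2 / q - 1 / p) / p ^ 3 := by
    rw [hk]; field_simp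
  have hM1' : M₁ = 2 * θ ^ 2 * Δ * S / (p * q) := by
    have hstep : M₁ = 2 * (θ ^ 2 / φ ^ 2) * (2 / q - 1 / p) * H⁻¹ * Δ := by
      rw [hM1, hkΓ, hΓ, hμ, hxe]
      have h1 : 6 * (θ ^ 2 / p ^ 2) * (2 * η / φ - γt) * (2 / q - 1 / p)
              * (Δ - (1 - x⁻¹) / p)
          = (6 * θ ^ 2 * (2 * η / φ - γt) * (2 / q - 1 / p) / p ^ 3)
              * (p * Δ - 1 + x⁻¹) := by
        field_simp; ring
      have h2 : 2 * (θ ^ 2 / p ^ 2) * Δ ^ 2 = 2 * (θ * Δ / p) ^ 2 := by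
        field_simp
      linarith [h1, h2]
    rw [hstep, hSval]
    field_simp
  have hM1pos : 0 < M₁ := by rw [hM1']; positivity
  -- M₂
  have hM2' : M₂ = (2 * p - q) / (2 * p) := by
    rw [hM2, hM1', hμ]
    field_simp
  -- M₃
  have hM3' : M₃ = (2 * p - q) * (2 * η - φ * γt) / (2 * p * φ) := by
    rw [hM3, hk, div_eq_div_iff (mul_ne_zero hM1pos.ne' hE0.ne') (by positivity), hM1']
    field_simp
  -- M₄
  have h2nd : 2 * Δ * k * Γ * p ^ 3 / (γt * M₁ * E * H) = φ * (2 * η - φ * γt) / γt := by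
    rw [hk, div_eq_div_iff (by positivity) hγt0.ne', hM1', hSval]
    field_simp
  have hM4' : M₄ = (p / γt + φ) ^ 2 := by
    rw [hM4, h2nd, hη']
    field_simp
    ring
  have hsq : Real.sqrt M₄ = p / γt + φ := by
    rw [hM4', Real.sqrt_sq (by positivity)]
  rw [hsq, hM2', hM3', hη', hSval]
  field_simp
  ring
end

section
/- Fix Δ > 0 and S > 0. For each parameter vector (θ, η, φ, γ) with θ, η, φ > 0, γ ∈ [0,1), p := η − φ(1+γ²) > 0 and q := 2p − φ²(1 + 6γ² + γ⁴)S > 0, define μ := θΔ/p, E := (1 − e^{−Δp})(e^{Δp} − 1), Γ := 6(θ²/p²)(2η/φ − (1+γ²))(2/q − 1/p)(Δ − (1 − e^{−Δp})/p) + 2(θ²/φ²)(2/q − 1/p)(1 + 6γ² + γ⁴)⁻¹Δ + 2(θ²/p²)Δ², and k := (θ²/(Γp³))(2η/φ − (1+γ²))(2/q − 1/p)E. Then the map (θ, η, φ, γ) ↦ (μ, Γ, p, k) is injective on this parameter set; in particular, from (μ, Γ, p, k) the parameters are uniquely recovered via θ = pμ/Δ, γ = √(γ̃ − 1), φ = −p/γ̃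 + √(p²/γ̃² + 2ΔkΓp³/(γ̃M₁E(γ̃² + 4γ̃ − 4))) and η = p + φγ̃, where γ̃ = 1 + γ² is the unique admissible solution of the identification equation of Theorem 5 and M₁ := Γ − (6kΓ/E)(pΔ − 1 + e^{−Δp}) − 2μ². -/
set_option maxHeartbeats 1000000

/-- The theoretical moment map of the GJR-COGARCH: to a parameter vector
`v = (θ, η, φ, γ)` it associates `(μ, Γ, p, k)`, the mean `μ = E[Gᵢ²]`, the variance
`Γ = var(Gᵢ²)` and the autocorrelation parameters `p, k` with
`cor(Gᵢ², Gᵢ₊ₕ²) = k e^{−Δhp}` of the squared stationary returns sampled at spacing `Δ`,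
for a driving Lévy process with fourth moment `S`. -/
noncomputable def gjrMomMap (Δ S : ℝ) (v : ℝ × ℝ × ℝ × ℝ) : ℝ × ℝ × ℝ × ℝ :=
  let θ := v.1; let η := v.2.1; let φ := v.2.2.1; let γ := v.2.2.2
  let γt := 1 + γ ^ 2
  let H := γt ^ 2 + 4 * γt - 4
  let p := η - φ * γt
  let q := 2 * p - φ ^ 2 * H * S
  let μ := θ * Δ / p
  let Γ := 6 * (θ ^ 2 / p ^ 2) * (2 * η / φ - γt) * (2 / q - 1 / p)
        * (Δ - (1 - Real.exp (-Δ * p)) / p)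
      + 2 * (θ ^ 2 / φ ^ 2) * (2 / q - 1 / p) * H⁻¹ * Δ
      + 2 * (θ ^ 2 / p ^ 2) * Δ ^ 2
  let k := (θ ^ 2 / (Γ * p ^ 3)) * (2 * η / φ - γt) * (2 / q - 1 / p)
      * ((1 - Real.exp (-Δ * p)) * (Real.exp (Δ * p) - 1))
  (μ, Γ, p, k)

/-- The admissible parameter set of Theorem 5: `θ, η, φ > 0`, `γ ∈ [0,1)`,
`p = η − φ(1+γ²) > 0` (i.e. `Ψ(1) < 0`) and `q = 2p − φ²(1+6γ²+γ⁴)S > 0`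
(i.e. `Ψ(2) < 0`). -/
def gjrAdmissible (S : ℝ) (v : ℝ × ℝ × ℝ × ℝ) : Prop :=
  0 < v.1 ∧ 0 < v.2.1 ∧ 0 < v.2.2.1 ∧ 0 ≤ v.2.2.2 ∧ v.2.2.2 < 1 ∧
  0 < v.2.1 - v.2.2.1 * (1 + v.2.2.2 ^ 2) ∧
  0 < 2 * (v.2.1 - v.2.2.1 * (1 + v.2.2.2 ^ 2))
      - v.2.2.1 ^ 2 * (1 + 6 * v.2.2.2 ^ 2 + v.2.2.2 ^ 4) * S

-- core facts lemma over raw reals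
lemma gjr_core (Δ S θ η φ t H p q a b Γ k : ℝ)
    (hHd : H = t ^ 2 + 4 * t - 4) (hpd : p = η - φ * t) (hqd : q = 2 * p - φ ^ 2 * H * S)
    (had : a = Real.exp (-Δ * p)) (hbd : b = Real.exp (Δ * p))
    (hΓd : Γ = 6 * (θ ^ 2 / p ^ 2) * (2 * η / φ - t) * (2 / q - 1 / p)
        * (Δ - (1 - a) / p)
      + 2 * (θ ^ 2 / φ ^ 2) * (2 / q - 1 / p) * H⁻¹ * Δ
      + 2 * (θ ^ 2 / p ^ 2) * Δ ^ 2)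
    (hkd : k = (θ ^ 2 / (Γ * p ^ 3)) * (2 * η / φ - t) * (2 / q - 1 / p)
      * ((1 - a) * (b - 1)))
    (hΔ : 0 < Δ) (hS : 0 < S) (hθ : 0 < θ) (hφ : 0 < φ) (ht : 1 ≤ t)
    (hp : 0 < p) (hq : 0 < q) :
    0 < Γ ∧ 0 < (1 - a) * (b - 1) ∧
    k * Γ = θ ^ 2 * S * ((1 - a) * (b - 1)) / (p ^ 4 * q) * ((2 * p + φ * t) * (φ * H)) ∧
    Γ - 6 * k * Γ / ((1 - a) * (b - 1)) * (p * Δ - 1 + a) - 2 * (θ * Δ / p) ^ 2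
      = 2 * θ ^ 2 * S * Δ / (p * q) := by
  have ht0 : 0 < t := by linarith
  have hH : 0 < H := by nlinarith
  have hη : η = p + φ * t := by linarith
  have h2pq : 2 * p - q = φ ^ 2 * H * S := by linarith
  have hX : 2 / q - 1 / p = φ ^ 2 * H * S / (q * p) := by
    rw [← h2pq]; field_simp
  have hXpos : 0 < φ ^ 2 * H * S / (q * p) := by positivity
  have h2η : 2 * η / φ - t = (2 * p + φ * t) / φ := by
    rw [hη]; field_simp; ring
  have h2ηpos : 0 < (2 * p + φ * t) / φ := by positivity
  have hab : a * b = 1 := by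
    rw [had, hbd, ← Real.exp_add]; norm_num
  have ha1 : a < 1 := by
    rw [had]; apply Real.exp_lt_one_iff.2; nlinarith
  have ha0 : 0 < a := by rw [had]; positivity
  have hb1 : 1 < b := by
    rw [hbd]; exact Real.one_lt_exp_iff.2 (by positivity)
  have hE : 0 < (1 - a) * (b - 1) := by nlinarith
  have hea : p * Δ - 1 + a > 0 := by
    have := Real.add_one_lt_exp (x := -Δ * p) (by nlinarith)
    rw [← had] at this; nlinarith
  have hDa : Δ - (1 - a) / p = (p * Δ - 1 + a) / p := by field_simp; ring
  have hΓpos : 0 < Γ := by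
    rw [hΓd, hX, h2η, hDa]
    have h1 : 0 < 6 * (θ ^ 2 / p ^ 2) * ((2 * p + φ * t) / φ) * (φ ^ 2 * H * S / (q * p))
        * ((p * Δ - 1 + a) / p) := by positivity
    have h2 : 0 < 2 * (θ ^ 2 / φ ^ 2) * (φ ^ 2 * H * S / (q * p)) * H⁻¹ * Δ := by positivity
    have h3 : 0 < 2 * (θ ^ 2 / p ^ 2) * Δ ^ 2 := by positivity
    linarith
  have hkΓ : k * Γ = θ ^ 2 * S * ((1 - a) * (b - 1)) / (p ^ 4 * q)
      * ((2 * p + φ * t) * (φ * H)) := by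
    rw [hkd, hX, h2η]
    field_simp
  refine ⟨hΓpos, hE, hkΓ, ?_⟩
  rw [show 6 * k * Γ = 6 * (k * Γ) by ring, hkΓ, hΓd, hX, h2η]
  field_simp [(sub_pos.2 ha1).ne', (sub_pos.2 hb1).ne']
  ring


lemma gjr_recover (p q t H φ θ Δ S E Γ k M₁ : ℝ)
    (hp : 0 < p) (hq : 0 < q) (hφ : 0 < φ) (ht : 0 < t) (hH : 0 < H) (hE : 0 < E)
    (hΔ : 0 < Δ) (hθ : 0 < θ) (hS : 0 < S)
    (hkΓ : k * Γ = θ ^ 2 * S * E / (p ^ 4 * q) * ((2 * p + φ * t) * (φ * H)))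
    (hM : M₁ = 2 * θ ^ 2 * S * Δ / (p * q)) :
    φ = -p / t + Real.sqrt (p ^ 2 / t ^ 2
        + 2 * Δ * k * Γ * p ^ 3 / (t * M₁ * E * H)) := by
  have h1 : p ^ 2 / t ^ 2 + 2 * Δ * k * Γ * p ^ 3 / (t * M₁ * E * H)
      = (p / t + φ) ^ 2 := by
    rw [show (2 * Δ * k * Γ * p ^ 3 : ℝ) = 2 * Δ * (k * Γ) * p ^ 3 by ring, hkΓ, hM]
    field_simp
    ring
  rw [h1, Real.sqrt_sq (by positivity)]
  ring

lemma gjr_tle (p C t t' u u' H H' : ℝ) (hp : 0 < p) (hC : 0 < C) (ht : 1 ≤ t) (ht' : 1 ≤ t')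
    (hH : H = t ^ 2 + 4 * t - 4) (hH' : H' = t' ^ 2 + 4 * t' - 4)
    (hu2 : u ^ 2 = C * H) (hu'2 : u' ^ 2 = C * H') (hu : 0 < u) (hu' : 0 < u')
    (hlin : 2 * p * u + t * C = 2 * p * u' + t' * C) : t' ≤ t := by
  by_contra h
  push_neg at h
  have hHH : H < H' := by nlinarith
  have h1 : u' < u := by nlinarith
  have h2 : C * H' < C * H := by nlinarith
  nlinarith

lemma gjr_uniq (Δ S θ p q q' E φ γ φ' γ' : ℝ)
    (hΔ : 0 < Δ) (hS : 0 < S) (hθ : 0 < θ) (hp : 0 < p) (hq : 0 < q) (hq' : 0 < q')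
    (hE : 0 < E) (hφ : 0 < φ) (hφ' : 0 < φ') (hγ : 0 ≤ γ) (hγ' : 0 ≤ γ')
    (hqd : q = 2 * p - φ ^ 2 * ((1 + γ ^ 2) ^ 2 + 4 * (1 + γ ^ 2) - 4) * S)
    (hq'd : q' = 2 * p - φ' ^ 2 * ((1 + γ' ^ 2) ^ 2 + 4 * (1 + γ' ^ 2) - 4) * S)
    (hM : 2 * θ ^ 2 * S * Δ / (p * q) = 2 * θ ^ 2 * S * Δ / (p * q'))
    (hK : θ ^ 2 * S * E / (p ^ 4 * q)
        * ((2 * p + φ * (1 + γ ^ 2)) * (φ * ((1 + γ ^ 2) ^ 2 + 4 * (1 + γ ^ 2) - 4)))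
      = θ ^ 2 * S * E / (p ^ 4 * q')
        * ((2 * p + φ' * (1 + γ' ^ 2)) * (φ' * ((1 + γ' ^ 2) ^ 2 + 4 * (1 + γ' ^ 2) - 4)))) :
    φ = φ' ∧ γ = γ' := by
  have ht : (1:ℝ) ≤ 1 + γ ^ 2 := by nlinarith [sq_nonneg γ]
  have ht' : (1:ℝ) ≤ 1 + γ' ^ 2 := by nlinarith [sq_nonneg γ']
  have hH : 0 < (1 + γ ^ 2) ^ 2 + 4 * (1 + γ ^ 2) - 4 := by nlinarith
  have hH' : 0 < (1 + γ' ^ 2) ^ 2 + 4 * (1 + γ' ^ 2) - 4 := by nlinarith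
  -- q = q'
  have hqq : q = q' := by
    rw [div_eq_div_iff (by positivity) (by positivity)] at hM
    have h2 : (2 * θ ^ 2 * S * Δ * p) * q' = (2 * θ ^ 2 * S * Δ * p) * q := by
      linear_combination hM
    exact (mul_left_cancel₀ (by positivity) h2).symm
  -- C equality
  have hC : φ ^ 2 * ((1 + γ ^ 2) ^ 2 + 4 * (1 + γ ^ 2) - 4)
      = φ' ^ 2 * ((1 + γ' ^ 2) ^ 2 + 4 * (1 + γ' ^ 2) - 4) := by
    have h3 : φ ^ 2 * ((1 + γ ^ 2) ^ 2 + 4 * (1 + γ ^ 2) - 4) * S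
        = φ' ^ 2 * ((1 + γ' ^ 2) ^ 2 + 4 * (1 + γ' ^ 2) - 4) * S := by linarith
    exact mul_right_cancel₀ (ne_of_gt hS) h3
  rw [hqq] at hK
  have hA : (2 * p + φ * (1 + γ ^ 2)) * (φ * ((1 + γ ^ 2) ^ 2 + 4 * (1 + γ ^ 2) - 4))
      = (2 * p + φ' * (1 + γ' ^ 2)) * (φ' * ((1 + γ' ^ 2) ^ 2 + 4 * (1 + γ' ^ 2) - 4)) :=
    mul_left_cancel₀ (by positivity) hK
  set t := 1 + γ ^ 2 with htd
  set t' := 1 + γ' ^ 2 with ht'd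
  set H := t ^ 2 + 4 * t - 4 with hHd
  set H' := t' ^ 2 + 4 * t' - 4 with hH'd
  have hlin : 2 * p * (φ * H) + t * (φ ^ 2 * H) = 2 * p * (φ' * H') + t' * (φ ^ 2 * H) := by
    linear_combination hA - t' * hC
  have h1 : t' ≤ t :=
    gjr_tle p (φ ^ 2 * H) t t' (φ * H) (φ' * H') H H' hp (by positivity) ht ht' rfl rfl
      (by ring) (by rw [hC]; ring) (by positivity) (by positivity) hlin
  have h2 : t ≤ t' :=
    gjr_tle p (φ ^ 2 * H) t' t (φ' * H') (φ * H) H' H hp (by positivity) ht' ht rfl rfl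
      (by rw [hC]; ring) (by ring) (by positivity) (by positivity) hlin.symm
  have htt : t = t' := le_antisymm h2 h1
  have hγγ : γ = γ' := by
    have hsq : γ ^ 2 = γ' ^ 2 := by rw [htd, ht'd] at htt; linarith
    calc γ = Real.sqrt (γ ^ 2) := (Real.sqrt_sq hγ).symm
    _ = Real.sqrt (γ' ^ 2) := by rw [hsq]
    _ = γ' := Real.sqrt_sq hγ'
  have hHH : H = H' := by rw [hHd, hH'd, htt]
  have hφφ : φ = φ' := by
    have hsq : φ ^ 2 = φ' ^ 2 := by
      rw [hHH] at hC
      exact mul_right_cancel₀ (ne_of_gt (hHH ▸ hH)) hC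
    calc φ = Real.sqrt (φ ^ 2) := (Real.sqrt_sq hφ.le).symm
    _ = Real.sqrt (φ' ^ 2) := by rw [hsq]
    _ = φ' := Real.sqrt_sq hφ'.le
  exact ⟨hφφ, hγγ⟩

/-- Deterministic core of Theorem 5 (method-of-moments identifiability of the
GJR-COGARCH): the map `(θ, η, φ, γ) ↦ (μ, Γ, p, k)` is injective on the admissible
parameter set; in particular, the parameters are uniquely recovered from `(μ, Γ, p, k)`
via `θ = pμ/Δ`, `γ = √(γ̃ − 1)`,
`φ = −p/γ̃ + √(p²/γ̃² + 2ΔkΓp³/(γ̃M₁E(γ̃² + 4γ̃ − 4)))` and `η = p + φγ̃`,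
where `γ̃ = 1 + γ²`, `E = (1 − e^{−Δp})(e^{Δp} − 1)` and
`M₁ = Γ − (6kΓ/E)(pΔ − 1 + e^{−Δp}) − 2μ²`. -/
theorem gjr_mom_identifiable (Δ S : ℝ) (hΔ : 0 < Δ) (hS : 0 < S) :
    Set.InjOn (gjrMomMap Δ S) {v : ℝ × ℝ × ℝ × ℝ | gjrAdmissible S v} ∧
    ∀ θ η φ γ : ℝ, gjrAdmissible S (θ, η, φ, γ) →
      let m := gjrMomMap Δ S (θ, η, φ, γ)
      let μ := m.1; let Γ := m.2.1; let p := m.2.2.1; let k := m.2.2.2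
      let E := (1 - Real.exp (-Δ * p)) * (Real.exp (Δ * p) - 1)
      let M₁ := Γ - (6 * k * Γ / E) * (p * Δ - 1 + Real.exp (-Δ * p)) - 2 * μ ^ 2
      let γt := 1 + γ ^ 2
      θ = p * μ / Δ ∧ γ = Real.sqrt (γt - 1) ∧
      φ = -p / γt + Real.sqrt (p ^ 2 / γt ^ 2
            + 2 * Δ * k * Γ * p ^ 3 / (γt * M₁ * E * (γt ^ 2 + 4 * γt - 4))) ∧
      η = p + φ * γt := by
  constructor
  · rintro ⟨θ, η, φ, γ⟩ hv ⟨θ', η', φ', γ'⟩ hv' heq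
    simp only [Set.mem_setOf_eq, gjrAdmissible] at hv hv'
    obtain ⟨hθ, hη, hφ, hγ0, hγ1, hp, hq⟩ := hv
    obtain ⟨hθ', hη', hφ', hγ0', hγ1', hp', hq'⟩ := hv'
    simp only [gjrMomMap, Prod.mk.injEq] at heq
    obtain ⟨hμe, hΓe, hpe, hke⟩ := heq
    have hq2 : 0 < 2 * (η - φ * (1 + γ ^ 2))
        - φ ^ 2 * ((1 + γ ^ 2) ^ 2 + 4 * (1 + γ ^ 2) - 4) * S := by
      have e : ((1 + γ ^ 2) ^ 2 + 4 * (1 + γ ^ 2) - 4 : ℝ) = 1 + 6 * γ ^ 2 + γ ^ 4 := by ring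
      rw [e]; exact hq
    have hq2' : 0 < 2 * (η' - φ' * (1 + γ' ^ 2))
        - φ' ^ 2 * ((1 + γ' ^ 2) ^ 2 + 4 * (1 + γ' ^ 2) - 4) * S := by
      have e : ((1 + γ' ^ 2) ^ 2 + 4 * (1 + γ' ^ 2) - 4 : ℝ) = 1 + 6 * γ' ^ 2 + γ' ^ 4 := by
        ring
      rw [e]; exact hq'
    obtain ⟨hΓpos, hEpos, hkΓ, hM⟩ :=
      gjr_core Δ S θ η φ (1 + γ ^ 2) _ _ _ _ _ _ _ rfl rfl rfl rfl rfl rfl rfl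
        hΔ hS hθ hφ (le_add_of_nonneg_right (sq_nonneg γ)) hp hq2
    obtain ⟨hΓpos', hEpos', hkΓ', hM'⟩ :=
      gjr_core Δ S θ' η' φ' (1 + γ' ^ 2) _ _ _ _ _ _ _ rfl rfl rfl rfl rfl rfl rfl
        hΔ hS hθ' hφ' (le_add_of_nonneg_right (sq_nonneg γ')) hp' hq2'
    -- θ equality
    have hθe : θ = θ' := by
      have h := hμe
      rw [← hpe, div_eq_div_iff (ne_of_gt hp) (ne_of_gt hp)] at h
      have h2 : θ * Δ = θ' * Δ := mul_right_cancel₀ (ne_of_gt hp) h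
      exact mul_right_cancel₀ (ne_of_gt hΔ) h2
    -- M₁ values equal
    have hMeq : 2 * θ ^ 2 * S * Δ
        / ((η - φ * (1 + γ ^ 2)) * (2 * (η - φ * (1 + γ ^ 2))
          - φ ^ 2 * ((1 + γ ^ 2) ^ 2 + 4 * (1 + γ ^ 2) - 4) * S))
        = 2 * θ' ^ 2 * S * Δ
        / ((η' - φ' * (1 + γ' ^ 2)) * (2 * (η' - φ' * (1 + γ' ^ 2))
          - φ' ^ 2 * ((1 + γ' ^ 2) ^ 2 + 4 * (1 + γ' ^ 2) - 4) * S)) := by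
      rw [← hM, ← hM']
      rw [hke, hΓe, hμe, hpe]
    -- kΓ values equal
    have hKeq : θ ^ 2 * S
        * ((1 - Real.exp (-Δ * (η - φ * (1 + γ ^ 2))))
            * (Real.exp (Δ * (η - φ * (1 + γ ^ 2))) - 1))
        / ((η - φ * (1 + γ ^ 2)) ^ 4 * (2 * (η - φ * (1 + γ ^ 2))
          - φ ^ 2 * ((1 + γ ^ 2) ^ 2 + 4 * (1 + γ ^ 2) - 4) * S))
        * ((2 * (η - φ * (1 + γ ^ 2)) + φ * (1 + γ ^ 2))
          * (φ * ((1 + γ ^ 2) ^ 2 + 4 * (1 + γ ^ 2) - 4)))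
        = θ' ^ 2 * S
        * ((1 - Real.exp (-Δ * (η' - φ' * (1 + γ' ^ 2))))
            * (Real.exp (Δ * (η' - φ' * (1 + γ' ^ 2))) - 1))
        / ((η' - φ' * (1 + γ' ^ 2)) ^ 4 * (2 * (η' - φ' * (1 + γ' ^ 2))
          - φ' ^ 2 * ((1 + γ' ^ 2) ^ 2 + 4 * (1 + γ' ^ 2) - 4) * S))
        * ((2 * (η' - φ' * (1 + γ' ^ 2)) + φ' * (1 + γ' ^ 2))
          * (φ' * ((1 + γ' ^ 2) ^ 2 + 4 * (1 + γ' ^ 2) - 4))) := by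
      rw [← hkΓ, ← hkΓ']
      rw [hke, hΓe]
    rw [← hpe, ← hθe] at hMeq hKeq
    rw [← hpe] at hq2'
    obtain ⟨hφe, hγe⟩ :=
      gjr_uniq Δ S θ (η - φ * (1 + γ ^ 2)) _ _ _ φ γ φ' γ'
        hΔ hS hθ hp hq2 hq2' hEpos hφ hφ' hγ0 hγ0' rfl rfl hMeq hKeq
    have hηe : η = η' := by
      rw [hφe, hγe] at hpe; linear_combination hpe
    simp only [Prod.mk.injEq]
    exact ⟨hθe, hηe, hφe, hγe⟩
  · intro θ η φ γ hadm
    simp only [gjrAdmissible] at hadm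
    obtain ⟨hθ, hη, hφ, hγ0, hγ1, hp, hq⟩ := hadm
    have hq2 : 0 < 2 * (η - φ * (1 + γ ^ 2))
        - φ ^ 2 * ((1 + γ ^ 2) ^ 2 + 4 * (1 + γ ^ 2) - 4) * S := by
      have e : ((1 + γ ^ 2) ^ 2 + 4 * (1 + γ ^ 2) - 4 : ℝ) = 1 + 6 * γ ^ 2 + γ ^ 4 := by ring
      rw [e]; exact hq
    have ht0 : (0:ℝ) < 1 + γ ^ 2 := by positivity
    have hH0 : (0:ℝ) < (1 + γ ^ 2) ^ 2 + 4 * (1 + γ ^ 2) - 4 := by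
      nlinarith [sq_nonneg γ, sq_nonneg (γ * γ)]
    obtain ⟨hΓpos, hEpos, hkΓ, hM⟩ :=
      gjr_core Δ S θ η φ (1 + γ ^ 2) _ _ _ _ _ _ _ rfl rfl rfl rfl rfl rfl rfl
        hΔ hS hθ hφ (le_add_of_nonneg_right (sq_nonneg γ)) hp hq2
    simp only [gjrMomMap]
    refine ⟨?_, ?_, ?_, ?_⟩
    · field_simp
    · rw [show (1 + γ ^ 2 - 1 : ℝ) = γ ^ 2 by ring, Real.sqrt_sq hγ0]
    · exact gjr_recover _ _ _ _ _ _ _ _ _ _ _ _ hp hq2 hφ ht0 hH0 hEpos hΔ hθ hS hkΓ hM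
    · ring
end
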